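/- Let ⟨[0,1], ⊕_p⟩ be a convex algebra satisfying (MO) and (UC). Then for all x, y ∈ [0,1] with x ≤ y, all z ∈ [x, V_{x,y}], and all p ∈ (0,1): y ⊕_p z = y ⊕_p V_{x,y}. -/

import Mathlib

open Set Filter Topology

/-- A convex algebra on the interval `[0,1] ⊆ ℝ`: `op p x y` denotes `x ⊕_p y`,
for `p ∈ (0,1)`, extended to `p ∈ [0,1]` by the projection axioms
`x ⊕_1 y = x` and `x ⊕_0 y = y`.  All axioms are required only on `[0,1]`;
values of `op` outside `[0,1]` are irrelevant. -/
structure UCA where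
  op : ℝ → ℝ → ℝ → ℝ
  mem : ∀ p ∈ Set.Icc (0:ℝ) 1, ∀ x ∈ Set.Icc (0:ℝ) 1, ∀ y ∈ Set.Icc (0:ℝ) 1,
      op p x y ∈ Set.Icc (0:ℝ) 1
  idem : ∀ p ∈ Set.Ioo (0:ℝ) 1, ∀ x ∈ Set.Icc (0:ℝ) 1, op p x x = x
  comm : ∀ p ∈ Set.Ioo (0:ℝ) 1, ∀ x ∈ Set.Icc (0:ℝ) 1, ∀ y ∈ Set.Icc (0:ℝ) 1,
      op p x y = op (1 - p) y x
  assoc : ∀ p ∈ Set.Ioo (0:ℝ) 1, ∀ q ∈ Set.Ioo (0:ℝ) 1,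
      ∀ x ∈ Set.Icc (0:ℝ) 1, ∀ y ∈ Set.Icc (0:ℝ) 1, ∀ z ∈ Set.Icc (0:ℝ) 1,
      op q (op p x y) z = op (p * q) x (op ((1 - p) * q / (1 - p * q)) y z)
  proj1 : ∀ x ∈ Set.Icc (0:ℝ) 1, ∀ y ∈ Set.Icc (0:ℝ) 1, op 1 x y = x
  proj0 : ∀ x ∈ Set.Icc (0:ℝ) 1, ∀ y ∈ Set.Icc (0:ℝ) 1, op 0 x y = y

/-- Monotonicity (MO): `x ≤ x'` implies `x ⊕_p y ≤ x' ⊕_p y`. -/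
def UCA.MO (A : UCA) : Prop :=
  ∀ x ∈ Set.Icc (0:ℝ) 1, ∀ x' ∈ Set.Icc (0:ℝ) 1, ∀ y ∈ Set.Icc (0:ℝ) 1,
    ∀ p ∈ Set.Ioo (0:ℝ) 1, x ≤ x' → A.op p x y ≤ A.op p x' y

/-- (UC): for `x, y ∈ [0,1)` and `p ∈ (0,1)`,
`limsup_{ε→0⁺} ((x+ε) ⊕_p (y+ε)) ≤ x ⊕_p y`. -/
def UCA.UC (A : UCA) : Prop :=
  ∀ x ∈ Set.Ico (0:ℝ) 1, ∀ y ∈ Set.Ico (0:ℝ) 1, ∀ p ∈ Set.Ioo (0:ℝ) 1,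
    Filter.limsup (fun ε => A.op p (x + ε) (y + ε)) (𝓝[>] (0:ℝ)) ≤ A.op p x y

/-- (LC): for `x ≤ y` in `[0,1]`, `liminf_{p→1⁻} (y ⊕_p x) ≥ y`. -/
def UCA.LC (A : UCA) : Prop :=
  ∀ x ∈ Set.Icc (0:ℝ) 1, ∀ y ∈ Set.Icc (0:ℝ) 1, x ≤ y →
    y ≤ Filter.liminf (fun p => A.op p y x) (𝓝[<] (1:ℝ))

/-- `y ⊳ x` : `y` eats `x`, i.e. `y ⊕_t x = y` for all `t ∈ (0,1]`. -/
def UCA.Eats (A : UCA) (y x : ℝ) : Prop :=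
  ∀ t ∈ Set.Ioc (0:ℝ) 1, A.op t y x = y

/-- `E^⊕ = { y ∈ [0,1] : y ⊳ 0 }`. -/
def UCA.E (A : UCA) : Set ℝ := {y ∈ Set.Icc (0:ℝ) 1 | A.Eats y 0}

/-- `V_{x,y} = inf { y ⊕_p x : p ∈ (0,1] }`. -/
noncomputable def UCA.V (A : UCA) (x y : ℝ) : ℝ :=
  sInf ((fun p => A.op p y x) '' Set.Ioc (0:ℝ) 1)

/-- Proposition 3.3(i): for a convex algebra on `[0,1]` satisfying (MO) and (UC),
for all `x ≤ y` in `[0,1]`, all `z ∈ [x, V_{x,y}]` and all `p ∈ (0,1)`,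
`y ⊕_p z = y ⊕_p V_{x,y}`. -/
-- monotonicity in the second argument
lemma mo2 (A : UCA) (hMO : A.MO) {p a b b' : ℝ} (hp : p ∈ Set.Ioo (0:ℝ) 1)
    (ha : a ∈ Set.Icc (0:ℝ) 1) (hb : b ∈ Set.Icc (0:ℝ) 1) (hb' : b' ∈ Set.Icc (0:ℝ) 1)
    (h : b ≤ b') : A.op p a b ≤ A.op p a b' := by
  have h1p : (1-p) ∈ Set.Ioo (0:ℝ) 1 := ⟨by linarith [hp.2], by linarith [hp.1]⟩
  rw [A.comm p hp a ha b hb, A.comm p hp a ha b' hb']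
  exact hMO b hb b' hb' a ha (1-p) h1p h

-- (y ⊕_s x) ⊕_a x = y ⊕_{s a} x
lemma opI3 (A : UCA) {x y : ℝ} (hx : x ∈ Set.Icc (0:ℝ) 1) (hy : y ∈ Set.Icc (0:ℝ) 1)
    {s a : ℝ} (hs : s ∈ Set.Ioc (0:ℝ) 1) (ha : a ∈ Set.Ioo (0:ℝ) 1) :
    A.op a (A.op s y x) x = A.op (s*a) y x := by
  rcases lt_or_eq_of_le hs.2 with h1 | h1
  · have hs' : s ∈ Set.Ioo (0:ℝ) 1 := ⟨hs.1, h1⟩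
    have hd : 0 < 1 - s*a := by nlinarith [hs.1, ha.1, ha.2]
    have hcoef : (1-s)*a/(1-s*a) ∈ Set.Ioo (0:ℝ) 1 := by
      constructor
      · exact div_pos (by nlinarith [ha.1]) hd
      · rw [div_lt_one hd]; nlinarith [ha.2]
    rw [A.assoc s hs' a ha y hy x hx x hx, A.idem _ hcoef x hx]
  · rw [h1, A.proj1 y hy x hx, one_mul]

-- y ⊕_b (y ⊕_s x) = y ⊕_{b + s(1-b)} x
lemma opI1 (A : UCA) {x y : ℝ} (hx : x ∈ Set.Icc (0:ℝ) 1) (hy : y ∈ Set.Icc (0:ℝ) 1)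
    {b s : ℝ} (hb : b ∈ Set.Ioo (0:ℝ) 1) (hs : s ∈ Set.Ioo (0:ℝ) 1) :
    A.op b y (A.op s y x) = A.op (b + s*(1-b)) y x := by
  have hq : b + s*(1-b) ∈ Set.Ioo (0:ℝ) 1 :=
    ⟨by nlinarith [hb.1, hs.1, hb.2], by nlinarith [hb.2, hs.2, hs.1]⟩
  have hqne : b + s*(1-b) ≠ 0 := ne_of_gt hq.1
  have h1bne : (1:ℝ) - b ≠ 0 := ne_of_gt (by linarith [hb.2])
  have hp' : b/(b+s*(1-b)) ∈ Set.Ioo (0:ℝ) 1 :=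
    ⟨div_pos hb.1 hq.1, (div_lt_one hq.1).2 (by nlinarith [hs.1, hb.2])⟩
  have h := A.assoc _ hp' _ hq y hy y hy x hx
  rw [A.idem _ hp' y hy] at h
  have e1 : b/(b+s*(1-b)) * (b+s*(1-b)) = b := div_mul_cancel₀ _ hqne
  rw [e1] at h
  have e2 : (1 - b/(b+s*(1-b))) * (b+s*(1-b)) / (1-b) = s := by
    field_simp
    ring
  rw [e2] at h
  exact h.symm

-- (y ⊕_r x) ⊕_{1/2} (y ⊕_q x) = y ⊕_{r/2+q/2} x
lemma opI2 (A : UCA) {x y : ℝ} (hx : x ∈ Set.Icc (0:ℝ) 1) (hy : y ∈ Set.Icc (0:ℝ) 1)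
    {r q : ℝ} (hr : r ∈ Set.Ioo (0:ℝ) 1) (hq : q ∈ Set.Ioo (0:ℝ) 1) :
    A.op (1/2) (A.op r y x) (A.op q y x) = A.op (r/2 + q/2) y x := by
  have hw : A.op q y x ∈ Set.Icc (0:ℝ) 1 := A.mem q ⟨hq.1.le, hq.2.le⟩ y hy x hx
  have hhalf : (1/2 : ℝ) ∈ Set.Ioo (0:ℝ) 1 := by norm_num
  have hdpos : (0:ℝ) < 1 - r*(1/2) := by linarith [hr.2]
  have hu : (1-r)*(1/2)/(1-r*(1/2)) ∈ Set.Ioo (0:ℝ) 1 := by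
    constructor
    · exact div_pos (by nlinarith [hr.2]) hdpos
    · rw [div_lt_one hdpos]; nlinarith [hr.1]
  have h1u : 1-(1-r)*(1/2)/(1-r*(1/2)) ∈ Set.Ioo (0:ℝ) 1 :=
    ⟨by linarith [hu.2], by linarith [hu.1]⟩
  have h := A.assoc r hr (1/2) hhalf y hy x hx (A.op q y x) hw
  rw [A.comm _ hu x hx (A.op q y x) hw] at h
  rw [opI3 A hx hy ⟨hq.1, hq.2.le⟩ h1u] at h
  have hrh : r*(1/2) ∈ Set.Ioo (0:ℝ) 1 := ⟨by linarith [hr.1], by linarith [hr.2]⟩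
  have hq1u : q*(1-(1-r)*(1/2)/(1-r*(1/2))) ∈ Set.Ioo (0:ℝ) 1 :=
    ⟨by nlinarith [hq.1, h1u.1], by nlinarith [hq.2, h1u.2, hq.1, h1u.1]⟩
  rw [opI1 A hx hy hrh hq1u] at h
  have hco : r*(1/2) + q*(1-(1-r)*(1/2)/(1-r*(1/2)))*(1-r*(1/2)) = r/2 + q/2 := by
    have hk : (1-(1-r)*(1/2)/(1-r*(1/2)))*(1-r*(1/2)) = 1/2 := by
      have h2r : (2:ℝ) - r ≠ 0 := by linarith [hr.2]
      field_simp
      ring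
    rw [mul_assoc, hk]
    ring
  rw [hco] at h
  exact h

lemma xlef (A : UCA) (hMO : A.MO) {x y : ℝ} (hx : x ∈ Set.Icc (0:ℝ) 1)
    (hy : y ∈ Set.Icc (0:ℝ) 1) (hxy : x ≤ y) {q : ℝ} (hq : q ∈ Set.Ioc (0:ℝ) 1) :
    x ≤ A.op q y x := by
  rcases lt_or_eq_of_le hq.2 with h1 | h1
  · calc x = A.op q x x := (A.idem q ⟨hq.1, h1⟩ x hx).symm
      _ ≤ A.op q y x := hMO x hx y hy x hx q ⟨hq.1, h1⟩ hxy
  · rw [h1, A.proj1 y hy x hx]; exact hxy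

lemma fley (A : UCA) (hMO : A.MO) {x y : ℝ} (hx : x ∈ Set.Icc (0:ℝ) 1)
    (hy : y ∈ Set.Icc (0:ℝ) 1) (hxy : x ≤ y) {q : ℝ} (hq : q ∈ Set.Ioc (0:ℝ) 1) :
    A.op q y x ≤ y := by
  rcases lt_or_eq_of_le hq.2 with h1 | h1
  · calc A.op q y x ≤ A.op q y y := mo2 A hMO ⟨hq.1, h1⟩ hy hx hy hxy
      _ = y := A.idem q ⟨hq.1, h1⟩ y hy
  · rw [h1, A.proj1 y hy x hx]

-- monotone in the coefficient
lemma fmono (A : UCA) (hMO : A.MO) {x y : ℝ} (hx : x ∈ Set.Icc (0:ℝ) 1)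
    (hy : y ∈ Set.Icc (0:ℝ) 1) (hxy : x ≤ y) {s q : ℝ}
    (hs : s ∈ Set.Ioc (0:ℝ) 1) (hq : q ∈ Set.Ioc (0:ℝ) 1) (hsq : s ≤ q) :
    A.op s y x ≤ A.op q y x := by
  have hfq : A.op q y x ∈ Set.Icc (0:ℝ) 1 := A.mem q ⟨hq.1.le, hq.2⟩ y hy x hx
  have hxfq : x ≤ A.op q y x := xlef A hMO hx hy hxy hq
  rcases eq_or_lt_of_le hsq with h | h
  · rw [h]
  · have hqpos : 0 < q := lt_trans hs.1 h
    have ha : s/q ∈ Set.Ioo (0:ℝ) 1 := ⟨div_pos hs.1 hqpos, (div_lt_one hqpos).2 h⟩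
    have h3 := opI3 A hx hy hq ha
    have e : q*(s/q) = s := by field_simp
    rw [e] at h3
    calc A.op s y x = A.op (s/q) (A.op q y x) x := h3.symm
      _ ≤ A.op (s/q) (A.op q y x) (A.op q y x) := mo2 A hMO ha hfq hx hfq hxfq
      _ = A.op q y x := A.idem _ ha _ hfq

theorem stmt_11 (A : UCA) (hMO : A.MO) (hUC : A.UC) :
    ∀ x ∈ Set.Icc (0:ℝ) 1, ∀ y ∈ Set.Icc (0:ℝ) 1, x ≤ y →
      ∀ z ∈ Set.Icc x (A.V x y), ∀ p ∈ Set.Ioo (0:ℝ) 1,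
        A.op p y z = A.op p y (A.V x y) := by
  intro x hx y hy hxy z hz p hp
  have hpI : p ∈ Set.Icc (0:ℝ) 1 := ⟨hp.1.le, hp.2.le⟩
  have hne : ((fun p => A.op p y x) '' Set.Ioc (0:ℝ) 1).Nonempty :=
    ⟨A.op 1 y x, ⟨1, ⟨one_pos, le_refl 1⟩, rfl⟩⟩
  have hlb : ∀ v ∈ (fun p => A.op p y x) '' Set.Ioc (0:ℝ) 1, x ≤ v := by
    rintro v ⟨s, hs, rfl⟩
    exact xlef A hMO hx hy hxy hs
  have hbdd : BddBelow ((fun p => A.op p y x) '' Set.Ioc (0:ℝ) 1) := ⟨x, hlb⟩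
  have hxV : x ≤ A.V x y := le_csInf hne hlb
  have hVle : ∀ s ∈ Set.Ioc (0:ℝ) 1, A.V x y ≤ A.op s y x := fun s hs =>
    csInf_le hbdd ⟨s, hs, rfl⟩
  have hVy : A.V x y ≤ y :=
    le_trans (hVle 1 ⟨one_pos, le_refl 1⟩) (le_of_eq (A.proj1 y hy x hx))
  have hV : A.V x y ∈ Set.Icc (0:ℝ) 1 := ⟨le_trans hx.1 hxV, le_trans hVy hy.2⟩
  have hzI : z ∈ Set.Icc (0:ℝ) 1 := ⟨le_trans hx.1 hz.1, le_trans hz.2 hV.2⟩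
  -- key1 : going slightly above p bounds `y ⊕_p V` from above
  have key1 : ∀ η : ℝ, 0 < η → η < 1 - p → A.op p y (A.V x y) ≤ A.op (p+η) y x := by
    intro η hη1 hη2
    have h1p : (0:ℝ) < 1 - p := by linarith [hp.2]
    have hr : η/(1-p) ∈ Set.Ioo (0:ℝ) 1 := ⟨div_pos hη1 h1p, (div_lt_one h1p).2 hη2⟩
    have hfr : A.op (η/(1-p)) y x ∈ Set.Icc (0:ℝ) 1 := A.mem _ ⟨hr.1.le, hr.2.le⟩ y hy x hx
    have h2 : A.op p y (A.V x y) ≤ A.op p y (A.op (η/(1-p)) y x) :=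
      mo2 A hMO hp hy hV hfr (hVle _ ⟨hr.1, hr.2.le⟩)
    have h3 := opI1 A hx hy hp hr
    have e : p + (η/(1-p))*(1-p) = p + η := by field_simp
    rw [h3, e] at h2
    exact h2
  -- key2 : A.op p y (A.V x y) ≤ A.op p y x
  have key2 : A.op p y (A.V x y) ≤ A.op p y x := by
    by_cases hB : ∀ q ∈ Set.Ioo p 1, (1:ℝ) ≤ A.op q y x
    · -- degenerate case : the values above p are all 1
      have hq : (p+1)/2 ∈ Set.Ioo p 1 := ⟨by linarith [hp.2], by linarith [hp.2]⟩
      have hqI : (p+1)/2 ∈ Set.Ioo (0:ℝ) 1 := ⟨by linarith [hp.1], hq.2⟩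
      have hfq1 : A.op ((p+1)/2) y x = 1 :=
        le_antisymm (A.mem _ ⟨hqI.1.le, hqI.2.le⟩ y hy x hx).2 (hB _ hq)
      have hy1 : y = 1 :=
        le_antisymm hy.2 (le_trans (hB _ hq) (fley A hMO hx hy hxy ⟨hqI.1, hqI.2.le⟩))
      have ha : p/((p+1)/2) ∈ Set.Ioo (0:ℝ) 1 :=
        ⟨div_pos hp.1 hqI.1, (div_lt_one hqI.1).2 hq.1⟩
      have hapq : p/((p+1)/2) ∈ Set.Ioo p 1 :=
        ⟨(lt_div_iff₀ hqI.1).2 (by nlinarith [hp.1, hq.2]), ha.2⟩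
      have h3 := opI3 A hx hy ⟨hqI.1, hqI.2.le⟩ ha
      have e : (p+1)/2 * (p/((p+1)/2)) = p := by
        have hne1 : (p:ℝ) + 1 ≠ 0 := by linarith [hp.1]
        field_simp
      rw [e, hfq1] at h3
      have h4 := hB _ hapq
      rw [hy1] at h4
      rw [h3] at h4
      exact le_trans (A.mem p hpI y hy _ hV).2 h4
    · push_neg at hB
      obtain ⟨q0, hq0, hfq0lt⟩ := hB
      have hq0I : q0 ∈ Set.Ioo (0:ℝ) 1 := ⟨lt_trans hp.1 hq0.1, hq0.2⟩
      -- clamped coefficient function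
      set F : ℝ → ℝ := fun t => A.op (min (max t (p/2)) 1) y x with hF
      have hclamp : ∀ t : ℝ, min (max t (p/2)) 1 ∈ Set.Ioc (0:ℝ) 1 := by
        intro t
        refine ⟨lt_min (lt_of_lt_of_le (by linarith [hp.1] : (0:ℝ) < p/2) (le_max_right _ _)) one_pos, min_le_right _ _⟩
      have hFmono : Monotone F := by
        intro s t hst
        exact fmono A hMO hx hy hxy (hclamp s) (hclamp t)
          (min_le_min (max_le_max hst (le_refl _)) (le_refl 1))
      have hclampeq : ∀ t : ℝ, p/2 ≤ t → t ≤ 1 → F t = A.op t y x := by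
        intro t h1 h2
        show A.op (min (max t (p/2)) 1) y x = A.op t y x
        rw [max_eq_left h1, min_eq_left h2]
      have hS : {t | ¬ContinuousAt F t}.Countable := hFmono.countable_not_continuousAt
      set δ := min (p/2) (q0 - p) with hδ
      have hδpos : 0 < δ := lt_min (by linarith [hp.1]) (by linarith [hq0.1])
      have hT : ({d | p - d ∈ {t | ¬ContinuousAt F t}} ∪
          {d | p + d ∈ {t | ¬ContinuousAt F t}} : Set ℝ).Countable := by
        apply Set.Countable.union
        · refine Set.Countable.mono ?_ (hS.image (fun t => p - t))
          rintro d hd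
          exact ⟨p - d, hd, by ring⟩
        · refine Set.Countable.mono ?_ (hS.image (fun t => t - p))
          rintro d hd
          exact ⟨p + d, hd, by ring⟩
      have hexd : ∃ d ∈ Set.Ioo (0:ℝ) δ, ContinuousAt F (p - d) ∧ ContinuousAt F (p + d) := by
        by_contra hcon
        push_neg at hcon
        have hsub : Set.Ioo (0:ℝ) δ ⊆ ({d | p - d ∈ {t | ¬ContinuousAt F t}} ∪
            {d | p + d ∈ {t | ¬ContinuousAt F t}} : Set ℝ) := by
          intro d hd
          by_cases h1 : ContinuousAt F (p - d)
          · exact Or.inr (hcon d hd h1)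
          · exact Or.inl h1
        have hm := MeasureTheory.measure_mono (μ := MeasureTheory.volume) hsub
        rw [hT.measure_zero MeasureTheory.volume, Real.volume_Ioo, sub_zero] at hm
        exact absurd hm (not_le.2 (ENNReal.ofReal_pos.2 hδpos))
      obtain ⟨d, hd, hc1, hc2⟩ := hexd
      have hdp2 : d < p/2 := lt_of_lt_of_le hd.2 (min_le_left _ _)
      have hdq0 : d < q0 - p := lt_of_lt_of_le hd.2 (min_le_right _ _)
      have hpd1 : p - d ∈ Set.Ioo (0:ℝ) 1 := ⟨by linarith [hd.1, hp.1], by linarith [hp.2, hd.1]⟩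
      have hpd2 : p + d ∈ Set.Ioo (0:ℝ) 1 := ⟨by linarith [hp.1, hd.1], by linarith [hq0.2]⟩
      have hAI : A.op (p-d) y x ∈ Set.Icc (0:ℝ) 1 := A.mem _ ⟨hpd1.1.le, hpd1.2.le⟩ y hy x hx
      have hBI : A.op (p+d) y x ∈ Set.Icc (0:ℝ) 1 := A.mem _ ⟨hpd2.1.le, hpd2.2.le⟩ y hy x hx
      have hBleq0 : A.op (p+d) y x ≤ A.op q0 y x :=
        fmono A hMO hx hy hxy ⟨hpd2.1, hpd2.2.le⟩ ⟨hq0I.1, hq0I.2.le⟩ (by linarith)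
      have hBlt1 : A.op (p+d) y x < 1 := lt_of_le_of_lt hBleq0 hfq0lt
      have hAleB : A.op (p-d) y x ≤ A.op (p+d) y x :=
        fmono A hMO hx hy hxy ⟨hpd1.1, hpd1.2.le⟩ ⟨hpd2.1, hpd2.2.le⟩ (by linarith [hd.1])
      have hAlt1 : A.op (p-d) y x < 1 := lt_of_le_of_lt hAleB hBlt1
      have hε₀pos : (0:ℝ) < 1 - A.op (p+d) y x := by linarith
      have hhalf : (1/2:ℝ) ∈ Set.Ioo (0:ℝ) 1 := by norm_num
      -- the eventual bound
      have hev : ∀ᶠ ε in 𝓝[>] (0:ℝ),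
          A.op p y (A.V x y) ≤ A.op (1/2) (A.op (p-d) y x + ε) (A.op (p+d) y x + ε) := by
        filter_upwards [Ioo_mem_nhdsGT_of_mem ⟨le_refl (0:ℝ), hε₀pos⟩] with ε hε
        have ht1 : ∀ᶠ t in 𝓝 (p-d), F t < F (p-d) + ε :=
          hc1 (Iio_mem_nhds (by linarith [hε.1]))
        have ht2 : ∀ᶠ t in 𝓝 (p+d), F t < F (p+d) + ε :=
          hc2 (Iio_mem_nhds (by linarith [hε.1]))
        have hmap1 : Tendsto (fun η : ℝ => p - d + η) (𝓝[>] 0) (𝓝 (p-d)) := by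
          have h0 : Tendsto (fun η : ℝ => p - d + η) (𝓝 0) (𝓝 (p - d + 0)) :=
            tendsto_const_nhds.add tendsto_id
          rw [add_zero] at h0
          exact h0.mono_left nhdsWithin_le_nhds
        have hmap2 : Tendsto (fun η : ℝ => p + d + η) (𝓝[>] 0) (𝓝 (p+d)) := by
          have h0 : Tendsto (fun η : ℝ => p + d + η) (𝓝 0) (𝓝 (p + d + 0)) :=
            tendsto_const_nhds.add tendsto_id
          rw [add_zero] at h0
          exact h0.mono_left nhdsWithin_le_nhds
        have hmin : (0:ℝ) < min d (1 - (p+d)) := lt_min hd.1 (by linarith [hpd2.2])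
        have ht3 : ∀ᶠ η in 𝓝[>] (0:ℝ), η ∈ Set.Ioo 0 (min d (1 - (p+d))) :=
          Ioo_mem_nhdsGT_of_mem ⟨le_refl (0:ℝ), hmin⟩
        obtain ⟨η, hη1, hη2, hη3⟩ := ((hmap1.eventually ht1).and ((hmap2.eventually ht2).and ht3)).exists
        have hη0 : 0 < η := hη3.1
        have hηd : η < d := hη3.2.trans_le (min_le_left _ _)
        have hη1pd : η < 1 - (p+d) := hη3.2.trans_le (min_le_right _ _)
        have hr' : p - d + η ∈ Set.Ioo (0:ℝ) 1 := ⟨by linarith [hpd1.1], by linarith [hp.2]⟩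
        have hq' : p + d + η ∈ Set.Ioo (0:ℝ) 1 := ⟨by linarith [hpd2.1], by linarith⟩
        rw [hclampeq _ (by linarith [hdp2]) (by linarith [hr'.2]),
            hclampeq _ (by linarith [hdp2]) hpd1.2.le] at hη1
        rw [hclampeq _ (by linarith [hdp2, hp.1]) (by linarith [hq'.2]),
            hclampeq _ (by linarith [hdp2, hp.1]) hpd2.2.le] at hη2
        have hmemr : A.op (p-d+η) y x ∈ Set.Icc (0:ℝ) 1 := A.mem _ ⟨hr'.1.le, hr'.2.le⟩ y hy x hx
        have hmemq : A.op (p+d+η) y x ∈ Set.Icc (0:ℝ) 1 := A.mem _ ⟨hq'.1.le, hq'.2.le⟩ y hy x hx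
        have hAepsI : A.op (p-d) y x + ε ∈ Set.Icc (0:ℝ) 1 :=
          ⟨by linarith [hAI.1, hε.1], by linarith [hAleB, hε.2]⟩
        have hBepsI : A.op (p+d) y x + ε ∈ Set.Icc (0:ℝ) 1 :=
          ⟨by linarith [hBI.1, hε.1], by linarith [hε.2]⟩
        have s2 : A.op (1/2) (A.op (p-d+η) y x) (A.op (p+d+η) y x) = A.op (p+η) y x := by
          rw [opI2 A hx hy hr' hq']
          congr 1
          ring
        calc A.op p y (A.V x y) ≤ A.op (p+η) y x := key1 η hη0 (by linarith)
          _ = A.op (1/2) (A.op (p-d+η) y x) (A.op (p+d+η) y x) := s2.symm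
          _ ≤ A.op (1/2) (A.op (p-d) y x + ε) (A.op (p+d+η) y x) :=
              hMO _ hmemr _ hAepsI _ hmemq (1/2) hhalf (le_of_lt hη1)
          _ ≤ A.op (1/2) (A.op (p-d) y x + ε) (A.op (p+d) y x + ε) :=
              mo2 A hMO hhalf hAepsI hmemq hBepsI (le_of_lt hη2)
      have hbdd2 : IsBoundedUnder (· ≤ ·) (𝓝[>] (0:ℝ))
          (fun ε => A.op (1/2) (A.op (p-d) y x + ε) (A.op (p+d) y x + ε)) := by
        apply isBoundedUnder_of_eventually_le (a := (1:ℝ))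
        filter_upwards [Ioo_mem_nhdsGT_of_mem ⟨le_refl (0:ℝ), hε₀pos⟩] with ε hε
        exact (A.mem (1/2) ⟨by norm_num, by norm_num⟩ _
          ⟨by linarith [hAI.1, hε.1], by linarith [hAleB, hε.2]⟩ _
          ⟨by linarith [hBI.1, hε.1], by linarith [hε.2]⟩).2
      have hlim := hUC (A.op (p-d) y x) ⟨hAI.1, hAlt1⟩ (A.op (p+d) y x) ⟨hBI.1, hBlt1⟩
        (1/2) hhalf
      have hfin : A.op p y (A.V x y) ≤ A.op (1/2) (A.op (p-d) y x) (A.op (p+d) y x) :=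
        le_trans (le_limsup_of_frequently_le hev.frequently hbdd2) hlim
      rw [opI2 A hx hy hpd1 hpd2] at hfin
      have : (p-d)/2 + (p+d)/2 = p := by ring
      rw [this] at hfin
      exact hfin
  have h1 : A.op p y x ≤ A.op p y z := mo2 A hMO hp hy hx hzI hz.1
  have h2 : A.op p y z ≤ A.op p y (A.V x y) := mo2 A hMO hp hy hzI hV hz.2
  exact le_antisymm h2 (le_trans key2 h1)
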